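/- If a node expression of the form ψ ∧ i:⟨a⟩χ is satisfiable and j is a nominal occurring neither in ψ nor in i:⟨a⟩χ, then (ψ ∧ i:⟨a⟩χ) ∧ i:⟨a⟩j ∧ j:χ is satisfiable; conversely, satisfiability of the latter implies satisfiability of the former. -/

import Mathlib

mutual
inductive PathE (P I A C : Type) : Type
  | atom (a : A)
  | jump (i : I)
  | test (φ : NodeE P I A C)
  | comp (α β : PathE P I A C)
  | union (α β : PathE P I A C)
inductive NodeE (P I A C : Type) : Type
  | prop (p : P)
  | nom (i : I)
  | neg (φ : NodeE P I A C)
  | and (φ ψ : NodeE P I A C)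
  | at (i : I) (φ : NodeE P I A C)
  | dia (a : A) (φ : NodeE P I A C)
  | cmp (b : Bool) (c : C) (α β : PathE P I A C)
end

structure HModel (P I A C : Type) where
  N : Type
  ne : Nonempty N
  R : A → N → N → Prop
  E : C → N → N → Prop
  equiv : ∀ c, Equivalence (E c)
  V : P → N → Prop
  g : I → N

mutual
def psat {P I A C : Type} (M : HModel P I A C) : PathE P I A C → M.N → M.N → Prop
  | .atom a, n, n' => M.R a n n'
  | .jump i, _, n' => M.g i = n'
  | .test φ, n, n' => n = n' ∧ nsat M φ n
  | .comp α β, n, n' => ∃ z, psat M α n z ∧ psat M β z n'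
  | .union α β, n, n' => psat M α n n' ∨ psat M β n n'
def nsat {P I A C : Type} (M : HModel P I A C) : NodeE P I A C → M.N → Prop
  | .prop p, n => M.V p n
  | .nom i, n => M.g i = n
  | .neg φ, n => ¬ nsat M φ n
  | .and φ ψ, n => nsat M φ n ∧ nsat M ψ n
  | .at i φ, _ => nsat M φ (M.g i)
  | .dia a φ, n => ∃ z, M.R a n z ∧ nsat M φ z
  | .cmp b c α β, n => ∃ z z', psat M α n z ∧ psat M β n z' ∧ (M.E c z z' ↔ b = true)
end

mutual
def nomsP {P I A C : Type} : PathE P I A C → Set I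
  | .atom _ => ∅
  | .jump i => {i}
  | .test φ => nomsN φ
  | .comp α β => nomsP α ∪ nomsP β
  | .union α β => nomsP α ∪ nomsP β
def nomsN {P I A C : Type} : NodeE P I A C → Set I
  | .prop _ => ∅
  | .nom i => {i}
  | .neg φ => nomsN φ
  | .and φ ψ => nomsN φ ∪ nomsN ψ
  | .at i φ => {i} ∪ nomsN φ
  | .dia _ φ => nomsN φ
  | .cmp _ _ α β => nomsP α ∪ nomsP β
end

def satisfiableN {P I A C : Type} (φ : NodeE P I A C) : Prop :=
  ∃ (M : HModel P I A C) (n : M.N), nsat M φ n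


noncomputable def updateG {P I A C : Type} (M : HModel P I A C) (j : I) (z : M.N) : HModel P I A C :=
  ⟨M.N, M.ne, M.R, M.E, M.equiv, M.V, fun k => open Classical in if k = j then z else M.g k⟩

theorem updateG_ne {P I A C : Type} (M : HModel P I A C) {j k : I} (z : M.N) (h : k ≠ j) :
    (updateG M j z).g k = M.g k := by simp [updateG, h]

theorem updateG_same {P I A C : Type} (M : HModel P I A C) (j : I) (z : M.N) :
    (updateG M j z).g j = z := by simp [updateG]

mutual
theorem psat_update {P I A C : Type} (M : HModel P I A C) (j : I) (z : M.N) :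
    ∀ (α : PathE P I A C), j ∉ nomsP α → ∀ n n' : M.N,
      (psat (updateG M j z) α n n' ↔ psat M α n n')
  | .atom a, _, n, n' => Iff.rfl
  | .jump k, hj, n, n' => by
      have hk : k ≠ j := by intro h; exact hj (h ▸ rfl)
      simp only [psat]; rw [updateG_ne M z hk]; exact Iff.rfl
  | .test φ, hj, n, n' => by
      simp only [psat]
      exact and_congr Iff.rfl (nsat_update M j z φ hj n)
  | .comp α β, hj, n, n' => by
      simp only [psat]
      exact exists_congr fun w => and_congr
        (psat_update M j z α (fun h => hj (Or.inl h)) n w)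
        (psat_update M j z β (fun h => hj (Or.inr h)) w n')
  | .union α β, hj, n, n' => by
      simp only [psat]
      exact or_congr
        (psat_update M j z α (fun h => hj (Or.inl h)) n n')
        (psat_update M j z β (fun h => hj (Or.inr h)) n n')
theorem nsat_update {P I A C : Type} (M : HModel P I A C) (j : I) (z : M.N) :
    ∀ (φ : NodeE P I A C), j ∉ nomsN φ → ∀ n : M.N,
      (nsat (updateG M j z) φ n ↔ nsat M φ n)
  | .prop p, _, n => Iff.rfl
  | .nom k, hj, n => by
      have hk : k ≠ j := by intro h; exact hj (h ▸ rfl)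
      simp only [nsat]; rw [updateG_ne M z hk]; exact Iff.rfl
  | .neg φ, hj, n => by
      simp only [nsat]
      exact not_congr (nsat_update M j z φ hj n)
  | .and φ ψ, hj, n => by
      simp only [nsat]
      exact and_congr
        (nsat_update M j z φ (fun h => hj (Or.inl h)) n)
        (nsat_update M j z ψ (fun h => hj (Or.inr h)) n)
  | .at k φ, hj, n => by
      have hk : k ≠ j := by intro h; exact hj (Or.inl (h ▸ rfl))
      simp only [nsat]; rw [updateG_ne M z hk]
      exact nsat_update M j z φ (fun h => hj (Or.inr h)) (M.g k)
  | .dia a φ, hj, n => by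
      simp only [nsat]
      exact exists_congr fun w => and_congr Iff.rfl (nsat_update M j z φ hj w)
  | .cmp b c α β, hj, n => by
      simp only [nsat]
      exact exists_congr fun w => exists_congr fun w' => and_congr
        (psat_update M j z α (fun h => hj (Or.inl h)) n w)
        (and_congr (psat_update M j z β (fun h => hj (Or.inr h)) n w') Iff.rfl)
end

theorem stmt5 {P I A C : Type} (ψ χ : NodeE P I A C) (i j : I) (a : A)
    (hj : j ∉ nomsN (NodeE.and ψ (.at i (.dia a χ)))) :
    satisfiableN (NodeE.and ψ (.at i (.dia a χ))) ↔
      satisfiableN (NodeE.and (NodeE.and ψ (.at i (.dia a χ)))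
        (.and (.at i (.dia a (.nom j))) (.at j χ))) := by
  constructor
  · rintro ⟨M, n, hψ, hdia⟩
    simp only [nsat] at hdia
    obtain ⟨z, hz, hχ⟩ := hdia
    have hjψ : j ∉ nomsN ψ := fun h => hj (Or.inl h)
    have hji : j ≠ i := fun h => hj (Or.inr (Or.inl (h ▸ rfl)))
    have hjχ : j ∉ nomsN χ := fun h => hj (Or.inr (Or.inr h))
    refine ⟨updateG M j z, n, ?_, ?_⟩
    · exact ⟨(nsat_update M j z ψ hjψ n).2 hψ, by
        show nsat _ (.dia a χ) _
        have hgi : (updateG M j z).g i = M.g i := updateG_ne M z (Ne.symm hji)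
        rw [hgi]
        exact ⟨z, hz, (nsat_update M j z χ hjχ z).2 hχ⟩⟩
    · constructor
      · show nsat _ (.dia a (.nom j)) _
        have hgi : (updateG M j z).g i = M.g i := updateG_ne M z (Ne.symm hji)
        rw [hgi]
        exact ⟨z, hz, updateG_same M j z⟩
      · show nsat _ χ _
        have : (updateG M j z).g j = z := updateG_same M j z
        rw [this]
        exact (nsat_update M j z χ hjχ z).2 hχ
  · rintro ⟨M, n, h1, _⟩
    exact ⟨M, n, h1⟩
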